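/- Let S ⊂ ℝ³ be a finite set whose convex hull P has nonempty interior (a convex polytope). Then every simple open polygonal chain all of whose edges are contained in the topological boundary of P can be straightened: there exists a motion of the chain in ℝ³ ending in a configuration in which all vertices are collinear. -/

import Mathlib

open scoped EuclideanGeometry RealInnerProductSpace

noncomputable section

abbrev E2 : Type := EuclideanSpace ℝ (Fin 2)
abbrev E3 : Type := EuclideanSpace ℝ (Fin 3)

/-- Simplicity of an open polygonal chain with vertices `v 0, …, v (n-1)`:
nonadjacent edges are disjoint, adjacent edges meet exactly in their common vertex. -/
def IsSimpleOpenChain {E : Type*} [NormedAddCommGroup E] [NormedSpace ℝ E]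
    (n : ℕ) (v : ℕ → E) : Prop :=
  (∀ i j : ℕ, i + 1 < n → j + 1 < n → i + 2 ≤ j →
    Disjoint (segment ℝ (v i) (v (i+1))) (segment ℝ (v j) (v (j+1)))) ∧
  ∀ i : ℕ, i + 2 < n →
    segment ℝ (v i) (v (i+1)) ∩ segment ℝ (v (i+1)) (v (i+2)) = {v (i+1)}

/-- A motion of an open chain: continuous on `[0,1]`, starting at `v`,
preserving all edge lengths and simplicity. -/
def IsChainMotion {E : Type*} [NormedAddCommGroup E] [NormedSpace ℝ E]
    (n : ℕ) (v : ℕ → E) (f : ℝ → ℕ → E) : Prop :=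
  (∀ i < n, ContinuousOn (fun t => f t i) (Set.Icc (0:ℝ) 1)) ∧
  (∀ i < n, f 0 i = v i) ∧
  (∀ t ∈ Set.Icc (0:ℝ) 1, ∀ i : ℕ, i + 1 < n →
    dist (f t (i+1)) (f t i) = dist (v (i+1)) (v i)) ∧
  (∀ t ∈ Set.Icc (0:ℝ) 1, IsSimpleOpenChain n (f t))

/-- The chain can be straightened: some motion ends with all vertices collinear. -/
def CanStraighten {E : Type*} [NormedAddCommGroup E] [NormedSpace ℝ E]
    (n : ℕ) (v : ℕ → E) : Prop :=
  ∃ f : ℝ → ℕ → E, IsChainMotion n v f ∧ Collinear ℝ (f 1 '' {i | i < n})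

private def clen (v : ℕ → E3) (m : ℕ) : ℝ := dist (v (m+1)) (v m)
private def csum (v : ℕ → E3) (j : ℕ) : ℝ := ∑ m ∈ Finset.range j, clen v m
private def udir (o x : E3) : E3 := ‖x - o‖⁻¹ • (x - o)
private def cfg (v : ℕ → E3) (k : ℕ) (x u : E3) : ℕ → E3 :=
  fun j => if j < k then v j else x + (csum v j - csum v k) • u

private lemma csum_mono (v : ℕ → E3) : Monotone (csum v) := by
  intro a b h
  exact Finset.sum_le_sum_of_subset_of_nonneg (Finset.range_subset_range.2 h)
    (fun i _ _ => dist_nonneg)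

private lemma csum_succ (v : ℕ → E3) (j : ℕ) : csum v (j+1) = csum v j + clen v j :=
  Finset.sum_range_succ _ _

private lemma ray_out {P : Set E3} (hconv : Convex ℝ P) {o x : E3} (ho : o ∈ interior P)
    (hx : x ∉ interior P) {s : ℝ} (hs : 0 < s) : x + s • (x - o) ∉ P := by
  intro hmem
  apply hx
  have hne : (1:ℝ) + s ≠ 0 := by positivity
  have h1 : (s/(1+s)) • o + (1/(1+s)) • (x + s • (x - o)) = x := by
    match_scalars <;> field_simp <;> ring
  have h2 := hconv.combo_interior_closure_mem_interior ho (subset_closure hmem)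
    (a := s/(1+s)) (b := 1/(1+s)) (by positivity) (by positivity) (by field_simp; ring)
  rwa [h1] at h2

private lemma udir_norm {o x : E3} (h : x ≠ o) : ‖udir o x‖ = 1 := by
  have h' : x - o ≠ 0 := sub_ne_zero.2 h
  rw [udir, norm_smul, norm_inv, norm_norm, inv_mul_cancel₀ (norm_ne_zero_iff.2 h')]

private lemma smul_udir {o x : E3} (h : x ≠ o) : ‖x - o‖ • udir o x = x - o := by
  have h' : x - o ≠ 0 := sub_ne_zero.2 h
  rw [udir, smul_smul, mul_inv_cancel₀ (norm_ne_zero_iff.2 h'), one_smul]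

private lemma seg_param {a x y : E3} (hy : y ∈ segment ℝ a x) :
    ∃ θ : ℝ, 0 ≤ θ ∧ θ ≤ 1 ∧ y = a + θ • (x - a) := by
  rw [segment_eq_image'] at hy
  obtain ⟨θ, hθ, rfl⟩ := hy
  exact ⟨θ, hθ.1, hθ.2, rfl⟩

private lemma tail_param {x u y : E3} {p q : ℝ} (hpq : p ≤ q)
    (hy : y ∈ segment ℝ (x + p • u) (x + q • u)) :
    ∃ s : ℝ, p ≤ s ∧ s ≤ q ∧ y = x + s • u := by
  rw [segment_eq_image'] at hy
  obtain ⟨θ, hθ, rfl⟩ := hy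
  refine ⟨p + θ * (q - p), by nlinarith [hθ.1, hθ.2], by nlinarith [hθ.1, hθ.2], ?_⟩
  module

private lemma smul_cancel {u : E3} (hu : u ≠ 0) {s t : ℝ} (h : s • u = t • u) : s = t := by
  by_contra hne
  have h2 := sub_smul s t u
  rw [h, sub_self] at h2
  rcases smul_eq_zero.1 h2 with h' | h'
  · exact hne (sub_eq_zero.1 h')
  · exact hu h'

private lemma mid_ne {n : ℕ} {v : ℕ → E3} (hs : IsSimpleOpenChain n v) :
    ∀ p : ℕ, 1 ≤ p → p + 2 < n → v p ≠ v (p+1) := by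
  intro p h1 h2 heq
  obtain ⟨q, rfl⟩ : ∃ q, p = q + 1 := ⟨p - 1, by omega⟩
  have hdis := hs.1 q (q+2) (by omega) (by omega) (by omega)
  have h3 : v (q+1) ∈ segment ℝ (v q) (v (q+1)) := right_mem_segment ℝ _ _
  have h4 : v (q+1) ∈ segment ℝ (v (q+2)) (v (q+2+1)) := by
    rw [heq]; exact left_mem_segment ℝ _ _
  exact Set.disjoint_left.1 hdis h3 h4

private lemma clen_pos {n : ℕ} {v : ℕ → E3} (hs : IsSimpleOpenChain n v)
    {p : ℕ} (h1 : 1 ≤ p) (h2 : p + 2 < n) : 0 < clen v p :=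
  dist_pos.2 fun h => (mid_ne hs p h1 h2) h.symm

set_option maxHeartbeats 1000000 in
private lemma stage_simple {P : Set E3} (hconv : Convex ℝ P) (hcl : IsClosed P)
    {o : E3} (ho : o ∈ interior P)
    {n : ℕ} {v : ℕ → E3} (hs : IsSimpleOpenChain n v)
    (hbd : ∀ i : ℕ, i + 1 < n → segment ℝ (v i) (v (i+1)) ⊆ frontier P)
    {m : ℕ} (hm : m + 1 < n)
    (ℓ : E3 →L[ℝ] ℝ) (hle : ∀ y ∈ P, ℓ y ≤ ℓ (v m)) (hoc : ℓ o < ℓ (v m))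
    {x : E3} (hx : ℓ (v m) < ℓ x) :
    IsSimpleOpenChain n (cfg v (m+1) x (udir o x)) := by
  set u := udir o x with hu_def
  have hoP : o ∈ P := interior_subset ho
  have hxP : x ∉ P := fun h => absurd (hle x h) (not_le.2 hx)
  have hxo : x ≠ o := by rintro rfl; exact hxP hoP
  have hxint : x ∉ interior P := fun h => hxP (interior_subset h)
  have hu1 : ‖u‖ = 1 := udir_norm hxo
  have hu0 : u ≠ 0 := by intro h; rw [h, norm_zero] at hu1; norm_num at hu1
  have ray : ∀ s : ℝ, 0 < s → x + s • u ∉ P := by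
    intro s hs'
    have hxo' : (0:ℝ) < ‖x - o‖ := norm_pos_iff.2 (sub_ne_zero.2 hxo)
    have heq : x + s • u = x + (s * ‖x - o‖⁻¹) • (x - o) := by
      rw [hu_def, udir, smul_smul]
    rw [heq]
    exact ray_out hconv ho hxint (by positivity)
  have hvmP : v m ∈ P := hcl.frontier_subset (hbd m hm (left_mem_segment ℝ _ _))
  have hedge : ∀ i, i + 1 ≤ m → segment ℝ (v i) (v (i+1)) ⊆ P := by
    intro i h
    exact (hbd i (by omega)).trans hcl.frontier_subset
  have hBout : ∀ θ : ℝ, 0 < θ → (v m + θ • (x - v m)) ∉ P := by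
    intro θ hθ hmem
    have h1 := hle _ hmem
    rw [map_add, map_smul, map_sub, smul_eq_mul] at h1
    nlinarith
  have hvm_ray : ∀ s : ℝ, 0 < s → v m ≠ x + s • u := by
    intro s hs' h; exact ray s hs' (h ▸ hvmP)
  set V := cfg v (m+1) x u with hV
  have cfgA : ∀ j, j ≤ m → V j = v j := by
    intro j h
    show (if j < m+1 then v j else _) = v j
    rw [if_pos (by omega)]
  have cfgT : ∀ j, m + 1 ≤ j → V j = x + (csum v j - csum v (m+1)) • u := by
    intro j h
    show (if j < m+1 then _ else _) = _
    rw [if_neg (by omega)]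
  have cfgX : V (m+1) = x := by rw [cfgT _ le_rfl]; simp
  have hmono := csum_mono v
  have tail_notP : ∀ (j : ℕ), m+1 ≤ j → ∀ y ∈ segment ℝ (V j) (V (j+1)), y ∉ P := by
    intro j hj y hy
    rw [cfgT j hj, cfgT (j+1) (by omega)] at hy
    obtain ⟨s, hs1, hs2, rfl⟩ := tail_param (sub_le_sub_right (hmono (Nat.le_succ j)) _) hy
    rcases eq_or_lt_of_le (le_trans (sub_nonneg.2 (hmono hj)) hs1) with h | h
    · rw [← h]; simpa using hxP
    · exact ray s h
  constructor
  · -- nonadjacent disjointness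
    intro i j hi hj hij
    rcases (by omega : i + 1 ≤ m ∨ i = m ∨ m + 1 ≤ i) with hA | hB | hT
    · rcases (by omega : j + 1 ≤ m ∨ j = m ∨ m + 1 ≤ j) with hA' | hB' | hT'
      · rw [show V i = v i from cfgA i (by omega), cfgA (i+1) hA,
            show V j = v j from cfgA j (by omega), cfgA (j+1) hA']
        exact hs.1 i j (by omega) (by omega) hij
      · -- (A, B) : j = m
        rw [show V i = v i from cfgA i (by omega), cfgA (i+1) hA,
            show V j = v j from cfgA j (by omega), show V (j+1) = x by rw [hB']; exact cfgX]
        rw [Set.disjoint_left]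
        intro y hyA hyB
        obtain ⟨θ, hθ0, hθ1, rfl⟩ := seg_param hyB
        rcases eq_or_lt_of_le hθ0 with h0 | h0
        · rw [← h0] at hyA
          simp only [zero_smul, add_zero] at hyA
          rcases (by omega : i + 2 = j ∨ i + 3 ≤ j) with hcase | hcase
          · have hadj := hs.2 i (by omega)
            have h5 : v j ∈ segment ℝ (v (i+1)) (v (i+1+1)) := by
              rw [show i+1+1 = j by omega]
              exact right_mem_segment ℝ _ _
            have hmem' : v j ∈ ({v (i+1)} : Set E3) := hadj ▸ ⟨hyA, h5⟩
            have h6 : v (i+1) = v (i+1+1) := by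
              rw [show i+1+1 = j by omega]; exact (Set.mem_singleton_iff.1 hmem').symm
            exact mid_ne hs (i+1) (by omega) (by omega) h6
          · obtain ⟨q, rfl⟩ : ∃ q, j = q + 1 := ⟨j - 1, by omega⟩
            have hdis := hs.1 i q (by omega) (by omega) (by omega)
            exact Set.disjoint_left.1 hdis hyA (right_mem_segment ℝ _ _)
        · rw [hB'] at hyA
          exact hBout θ h0 (hedge i hA hyA)
      · -- (A, T)
        rw [show V i = v i from cfgA i (by omega), cfgA (i+1) hA]
        rw [Set.disjoint_left]
        intro y hyA hyT
        exact tail_notP j hT' y hyT (hedge i hA hyA)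
    · -- (B, T) : i = m , j ≥ m+2
      rw [show V i = v i from cfgA i (le_of_eq hB), show V (i+1) = x by rw [hB]; exact cfgX]
      rw [Set.disjoint_left]
      intro y hyB hyT
      have hjT : m + 1 ≤ j := by omega
      rw [cfgT j hjT, cfgT (j+1) (by omega)] at hyT
      obtain ⟨s, hs1, hs2, hy_eq⟩ := tail_param (sub_le_sub_right (hmono (Nat.le_succ j)) _) hyT
      obtain ⟨θ, hθ0, hθ1, hy_eq'⟩ := seg_param hyB
      have hlpos : 0 < clen v (m+1) := clen_pos hs (by omega) (by omega)
      have hspos : 0 < s := by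
        have h1 : csum v (m+2) ≤ csum v j := hmono (by omega)
        have h2 : csum v (m+1+1) = csum v (m+1) + clen v (m+1) := csum_succ v (m+1)
        have h2' : csum v (m+2) = csum v (m+1) + clen v (m+1) := h2
        linarith
      have hcomb : v i + θ • (x - v i) = x + s • u := hy_eq'.symm.trans hy_eq
      rw [hB] at hcomb
      have hkey : (1-θ) • (v m - x) = s • u := by
        linear_combination (norm := module) hcomb
      rcases eq_or_lt_of_le hθ1 with h1 | h1
      · rw [← h1, sub_self, zero_smul] at hkey
        have : s = 0 := smul_cancel hu0 (by rw [← hkey, zero_smul])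
        linarith
      · have h1θ : (0:ℝ) < 1 - θ := by linarith
        have hvmx : v m - x = ((1-θ)⁻¹ * s) • u := by
          have h3 := congrArg (fun z => (1-θ)⁻¹ • z) hkey
          simpa [smul_smul, inv_mul_cancel₀ (ne_of_gt h1θ)] using h3
        refine hvm_ray ((1-θ)⁻¹ * s) (by positivity) ?_
        rw [← hvmx]; abel
    · -- (T, T)
      rw [cfgT i hT, cfgT (i+1) (by omega), cfgT j (by omega), cfgT (j+1) (by omega)]
      rw [Set.disjoint_left]
      intro y hy1 hy2
      obtain ⟨s1, hs11, hs12, hy_eq1⟩ :=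
        tail_param (sub_le_sub_right (hmono (Nat.le_succ i)) _) hy1
      obtain ⟨s2, hs21, hs22, hy_eq2⟩ :=
        tail_param (sub_le_sub_right (hmono (Nat.le_succ j)) _) hy2
      have heq : s1 = s2 := by
        apply smul_cancel hu0
        have := hy_eq1.symm.trans hy_eq2
        exact add_left_cancel this
      have hstrict : csum v (i+1) < csum v j := by
        have h1 : csum v (i+1+1) = csum v (i+1) + clen v (i+1) := csum_succ v (i+1)
        have h2 : 0 < clen v (i+1) := clen_pos hs (by omega) (by omega)
        have h3 : csum v (i+2) ≤ csum v j := hmono (by omega)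
        have h4 : csum v (i+1+1) = csum v (i+2) := rfl
        linarith
      linarith
  · -- adjacent intersections
    intro i hi
    rcases (by omega : i + 2 ≤ m ∨ i + 1 = m ∨ i = m ∨ m + 1 ≤ i) with h1 | h2 | h3 | h4
    · rw [show V i = v i from cfgA i (by omega), cfgA (i+1) (by omega), cfgA (i+2) h1]
      exact hs.2 i hi
    · rw [show V i = v i from cfgA i (by omega), cfgA (i+1) (by omega),
          show V (i+2) = x by rw [show i+2 = m+1 by omega]; exact cfgX]
      ext y
      simp only [Set.mem_inter_iff, Set.mem_singleton_iff]
      constructor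
      · rintro ⟨hyA, hyB⟩
        obtain ⟨θ, hθ0, hθ1, rfl⟩ := seg_param hyB
        rcases eq_or_lt_of_le hθ0 with h0 | h0
        · rw [← h0]; simp
        · exfalso
          have hmi : m = i + 1 := by omega
          apply hBout θ h0
          rw [hmi]
          exact hedge i (by omega) hyA
      · rintro rfl
        exact ⟨right_mem_segment ℝ _ _, left_mem_segment ℝ _ _⟩
    · -- adjacent: moving edge and first tail edge
      have hVX : V (i+1) = x := by rw [show i+1 = m+1 by omega]; exact cfgX
      rw [show V i = v i from cfgA i (le_of_eq h3), hVX, cfgT (i+2) (by omega)]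
      have hq0 : (0:ℝ) ≤ csum v (i+2) - csum v (m+1) := sub_nonneg.2 (hmono (by omega))
      ext y
      simp only [Set.mem_inter_iff, Set.mem_singleton_iff]
      constructor
      · rintro ⟨hyB, hyT⟩
        have hseg : y ∈ segment ℝ (x + (0:ℝ) • u) (x + (csum v (i+2) - csum v (m+1)) • u) := by
          rw [zero_smul, add_zero]; exact hyT
        obtain ⟨s, hs1, hs2, hy_eq⟩ := tail_param hq0 hseg
        obtain ⟨θ, hθ0, hθ1, hy_eq'⟩ := seg_param hyB
        have hcomb : v m + θ • (x - v m) = x + s • u := by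
          rw [← h3]
          exact hy_eq'.symm.trans hy_eq
        have hkey : (1-θ) • (v m - x) = s • u := by
          linear_combination (norm := module) hcomb
        rcases eq_or_lt_of_le hs1 with hz | hz
        · rw [hy_eq, ← hz, zero_smul, add_zero]
        · exfalso
          rcases eq_or_lt_of_le hθ1 with hone | hone
          · rw [hone, sub_self, zero_smul] at hkey
            have hs0 : s = 0 := smul_cancel hu0 (by rw [zero_smul]; exact hkey.symm)
            linarith
          · have h1θ : (0:ℝ) < 1 - θ := by linarith
            have hvmx : v m - x = ((1-θ)⁻¹ * s) • u := by
              have h3' := congrArg (fun z => (1-θ)⁻¹ • z) hkey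
              simpa [smul_smul, inv_mul_cancel₀ (ne_of_gt h1θ)] using h3'
            refine hvm_ray ((1-θ)⁻¹ * s) (by positivity) ?_
            rw [← hvmx]; abel
      · intro hy
        rw [hy]
        refine ⟨right_mem_segment ℝ _ _, ?_⟩
        have h' := left_mem_segment ℝ (x + (0:ℝ) • u) (x + (csum v (i+2) - csum v (m+1)) • u)
        rw [zero_smul, add_zero] at h'
        exact h'
    · -- adjacent: two tail edges
      rw [cfgT i h4, cfgT (i+1) (by omega), cfgT (i+2) (by omega)]
      have h01 : csum v i - csum v (m+1) ≤ csum v (i+1) - csum v (m+1) :=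
        sub_le_sub_right (hmono (Nat.le_succ i)) _
      have h12 : csum v (i+1) - csum v (m+1) ≤ csum v (i+2) - csum v (m+1) :=
        sub_le_sub_right (hmono (by omega)) _
      ext y
      simp only [Set.mem_inter_iff, Set.mem_singleton_iff]
      constructor
      · rintro ⟨hy1, hy2⟩
        obtain ⟨s1, hs11, hs12, hy_eq1⟩ := tail_param h01 hy1
        obtain ⟨s2, hs21, hs22, hy_eq2⟩ := tail_param h12 hy2
        have hss : s1 = s2 := smul_cancel hu0 (add_left_cancel (hy_eq1.symm.trans hy_eq2))
        rw [← hss] at hs21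
        have hs1eq : s1 = csum v (i+1) - csum v (m+1) := le_antisymm hs12 hs21
        rw [hy_eq1, hs1eq]
      · rintro rfl
        exact ⟨right_mem_segment ℝ _ _, left_mem_segment ℝ _ _⟩

private lemma support_exists {P : Set E3} (hconv : Convex ℝ P) (hcl : IsClosed P)
    {o a b : E3} (ho : o ∈ interior P) (hseg : segment ℝ a b ⊆ frontier P) :
    ∃ f : E3 →L[ℝ] ℝ, (∀ y ∈ P, f y ≤ f a) ∧ f b = f a ∧ f o < f a := by
  set z := (1/2 : ℝ) • a + (1/2 : ℝ) • b with hz_def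
  have hz : z ∈ segment ℝ a b := ⟨1/2, 1/2, by norm_num, by norm_num, by norm_num, rfl⟩
  have hzf := hseg hz
  rw [hcl.frontier_eq] at hzf
  have hzint : z ∉ interior P := hzf.2
  obtain ⟨f, hf⟩ := geometric_hahn_banach_open_point hconv.interior isOpen_interior hzint
  have key : ∀ y ∈ P, f y ≤ f z := by
    intro y hy
    by_contra hlt
    push_neg at hlt
    have hoy : f o < f z := hf o ho
    set t : ℝ := (f y - f z) / (2 * (f y - f o)) with ht_def
    have h1 : 0 < f y - f o := by linarith
    have ht0 : 0 < t := by
      apply div_pos (by linarith) (by linarith)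
    have ht1 : t ≤ 1 := by
      rw [div_le_one (by linarith)]; linarith
    have hint : y + t • (o - y) ∈ interior P :=
      hconv.add_smul_sub_mem_interior hy ho ⟨ht0, ht1⟩
    have h2 := hf _ hint
    rw [map_add, map_smul, map_sub, smul_eq_mul] at h2
    have h3 : t * (f y - f o) = (f y - f z) / 2 := by
      rw [ht_def]; field_simp
    nlinarith
  have hafz : f a ≤ f z := key a (hcl.frontier_subset (hseg (left_mem_segment ℝ a b)))
  have hbfz : f b ≤ f z := key b (hcl.frontier_subset (hseg (right_mem_segment ℝ a b)))
  have hzab : f z = (1/2) * f a + (1/2) * f b := by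
    rw [hz_def, map_add, map_smul, map_smul, smul_eq_mul, smul_eq_mul]
  have hfa : f a = f z := by linarith
  exact ⟨f, fun y hy => hfa ▸ key y hy, by linarith, by have := hf o ho; linarith⟩

private lemma dist_tail {x u : E3} (hu : ‖u‖ = 1) {a b : ℝ} (hab : b ≤ a) :
    dist (x + a • u) (x + b • u) = a - b := by
  rw [dist_eq_norm]
  have h : (x + a • u) - (x + b • u) = (a - b) • u := by module
  rw [h, norm_smul, hu, mul_one, Real.norm_eq_abs, abs_of_nonneg (by linarith)]

private lemma cfg_dist {v : ℕ → E3} {o : E3} {m : ℕ} {x : E3}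
    (hx0 : x ≠ o) (hd : dist x (v m) = clen v m) (j : ℕ) :
    dist (cfg v (m+1) x (udir o x) (j+1)) (cfg v (m+1) x (udir o x) j) = clen v j := by
  set u := udir o x with hu_def
  have hu : ‖u‖ = 1 := udir_norm hx0
  rcases (by omega : j + 1 ≤ m ∨ j = m ∨ m + 1 ≤ j) with h | h | h
  · show dist (if j+1 < m+1 then _ else _) (if j < m+1 then _ else _) = _
    rw [if_pos (by omega), if_pos (by omega)]
    rfl
  · subst h
    show dist (if j+1 < j+1 then _ else _) (if j < j+1 then _ else _) = _
    rw [if_neg (by omega), if_pos (by omega)]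
    simp only [sub_self, zero_smul, add_zero]
    exact hd
  · show dist (if j+1 < m+1 then _ else _) (if j < m+1 then _ else _) = _
    rw [if_neg (by omega), if_neg (by omega)]
    rw [dist_tail hu (sub_le_sub_right (csum_mono v (Nat.le_succ j)) _)]
    rw [csum_succ]; ring

private lemma csum_zero (v : ℕ → E3) : csum v 0 = 0 := rfl

private lemma cfg0_dist {v : ℕ → E3} {o : E3} (hne : v 0 ≠ o) (j : ℕ) :
    dist (cfg v 0 (v 0) (udir o (v 0)) (j+1)) (cfg v 0 (v 0) (udir o (v 0)) j) = clen v j := by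
  have hu : ‖udir o (v 0)‖ = 1 := udir_norm hne
  show dist (if j+1 < 0 then _ else _) (if j < 0 then _ else _) = _
  rw [if_neg (by omega), if_neg (by omega)]
  rw [dist_tail hu (sub_le_sub_right (csum_mono v (Nat.le_succ j)) _)]
  rw [csum_succ]; ring

private lemma cfg_trans {v : ℕ → E3} {o : E3} (m : ℕ) (hvo : v m ≠ o) :
    cfg v (m+1) (v m + clen v m • udir o (v m)) (udir o (v m + clen v m • udir o (v m)))
      = cfg v m (v m) (udir o (v m)) := by
  set u0 := udir o (v m) with hu0_def
  have hnorm : 0 < ‖v m - o‖ := norm_pos_iff.2 (sub_ne_zero.2 hvo)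
  have hclen : 0 ≤ clen v m := dist_nonneg
  have hRpos : 0 < ‖v m - o‖ + clen v m := by linarith
  have hρo : (v m + clen v m • u0) - o = (‖v m - o‖ + clen v m) • u0 := by
    have h1 : ‖v m - o‖ • u0 = v m - o := smul_udir hvo
    have h2 : (‖v m - o‖ + clen v m) • u0 = ‖v m - o‖ • u0 + clen v m • u0 := add_smul _ _ _
    rw [h2, h1]; abel
  have hρu : udir o (v m + clen v m • u0) = u0 := by
    rw [udir, hρo, norm_smul, Real.norm_eq_abs, abs_of_pos hRpos, udir_norm hvo, mul_one,
      smul_smul, inv_mul_cancel₀ (ne_of_gt hRpos), one_smul]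
  funext j
  show (if j < m+1 then _ else _) = (if j < m then _ else _)
  by_cases h1 : j < m
  · rw [if_pos (by omega), if_pos h1]
  by_cases h2 : j = m
  · subst h2
    rw [if_pos (by omega), if_neg (by omega)]
    simp
  · rw [if_neg (by omega), if_neg (by omega), hρu, csum_succ]
    module

private def wvec (v : ℕ → E3) (o : E3) (m : ℕ) (t : ℝ) : E3 :=
  (1-t) • (v (m+1) - v m) + t • (clen v m • udir o (v m))

private def xpath (v : ℕ → E3) (o : E3) (m : ℕ) (t : ℝ) : E3 :=
  v m + (clen v m / ‖wvec v o m t‖) • wvec v o m t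

private lemma xpath_dist {v : ℕ → E3} {o : E3} {m : ℕ} {t : ℝ}
    (h : wvec v o m t ≠ 0 ∨ clen v m = 0) :
    dist (xpath v o m t) (v m) = clen v m := by
  rcases h with h | h
  · rw [xpath, dist_eq_norm, add_sub_cancel_left, norm_smul, Real.norm_eq_abs,
      abs_of_nonneg (show (0:ℝ) ≤ clen v m / ‖wvec v o m t‖ from
        div_nonneg dist_nonneg (norm_nonneg _)),
      div_mul_cancel₀ _ (norm_ne_zero_iff.2 h)]
  · have hA : v (m+1) - v m = 0 := by
      rw [sub_eq_zero]; exact dist_eq_zero.1 h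
    have hw : wvec v o m t = 0 := by
      rw [wvec, hA, h]; simp
    rw [xpath, hw, h]; simp

private lemma xpath_zero {v : ℕ → E3} {o : E3} {m : ℕ} :
    xpath v o m 0 = v (m+1) := by
  have hw : wvec v o m 0 = v (m+1) - v m := by rw [wvec]; simp
  by_cases hc : clen v m = 0
  · have hA : v (m+1) = v m := dist_eq_zero.1 hc
    rw [xpath, hw, hA, hc]; simp
  · have hnA : ‖v (m+1) - v m‖ = clen v m := by rw [clen, dist_eq_norm]
    rw [xpath, hw, hnA, div_self hc, one_smul]
    abel

private lemma xpath_one {v : ℕ → E3} {o : E3} {m : ℕ} (hvo : v m ≠ o) :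
    xpath v o m 1 = v m + clen v m • udir o (v m) := by
  have hw : wvec v o m 1 = clen v m • udir o (v m) := by rw [wvec]; simp
  by_cases hc : clen v m = 0
  · rw [xpath, hw, hc]; simp
  · have hn : ‖clen v m • udir o (v m)‖ = clen v m := by
      rw [norm_smul, udir_norm hvo, mul_one, Real.norm_eq_abs,
        abs_of_nonneg (show (0:ℝ) ≤ clen v m from dist_nonneg)]
    rw [xpath, hw, hn, div_self hc, one_smul]

private lemma frontier_ne_o {P : Set E3} (hcl : IsClosed P) {o y : E3}
    (ho : o ∈ interior P) (hy : y ∈ frontier P) : y ≠ o := by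
  intro h
  rw [hcl.frontier_eq] at hy
  exact hy.2 (h ▸ ho)

set_option maxHeartbeats 1000000 in
private lemma stage_path {P : Set E3} (hconv : Convex ℝ P) (hcl : IsClosed P)
    {o : E3} (ho : o ∈ interior P)
    {n : ℕ} {v : ℕ → E3} (hs : IsSimpleOpenChain n v)
    (hbd : ∀ i : ℕ, i + 1 < n → segment ℝ (v i) (v (i+1)) ⊆ frontier P)
    {m : ℕ} (hm : m + 1 < n)
    (hstart : IsSimpleOpenChain n (cfg v (m+1) (v (m+1)) (udir o (v (m+1))))) :
    ∃ g : Path (cfg v (m+1) (v (m+1)) (udir o (v (m+1)))) (cfg v m (v m) (udir o (v m))),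
      (∀ t : unitInterval, IsSimpleOpenChain n (g t)) ∧
      (∀ t : unitInterval, ∀ j : ℕ, dist (g t (j+1)) (g t j) = clen v j) := by
  have hvm_fr : v m ∈ frontier P := hbd m hm (left_mem_segment ℝ _ _)
  have hvm1_fr : v (m+1) ∈ frontier P := hbd m hm (right_mem_segment ℝ _ _)
  have hvo : v m ≠ o := frontier_ne_o hcl ho hvm_fr
  have hv1o : v (m+1) ≠ o := frontier_ne_o hcl ho hvm1_fr
  by_cases hc : clen v m = 0
  · -- degenerate stage: the configuration is constant
    have hvv : v (m+1) = v m := dist_eq_zero.1 hc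
    have hxconst : ∀ t : ℝ, xpath v o m t = v (m+1) := by
      intro t
      have hA : v (m+1) - v m = 0 := by rw [sub_eq_zero]; exact hvv
      have hw : wvec v o m t = 0 := by rw [wvec, hA, hc]; simp
      rw [xpath, hw, hc, hvv]; simp
    have hρ : v m + clen v m • udir o (v m) = v (m+1) := by
      rw [hc, zero_smul, add_zero, hvv]
    refine ⟨⟨⟨fun t => cfg v (m+1) (xpath v o m ↑t) (udir o (xpath v o m ↑t)), ?_⟩, ?_, ?_⟩,
      ?_, ?_⟩
    · have hfun : (fun t : unitInterval => cfg v (m+1) (xpath v o m ↑t) (udir o (xpath v o m ↑t)))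
          = fun _ => cfg v (m+1) (v (m+1)) (udir o (v (m+1))) := by
        funext t; rw [hxconst]
      rw [hfun]; exact continuous_const
    · show cfg v (m+1) (xpath v o m ((0 : unitInterval) : ℝ)) _ = _
      rw [Set.Icc.coe_zero, hxconst]
    · show cfg v (m+1) (xpath v o m ((1 : unitInterval) : ℝ)) _ = _
      rw [Set.Icc.coe_one, hxconst, ← hρ]
      exact cfg_trans m hvo
    · intro t
      show IsSimpleOpenChain n (cfg v (m+1) (xpath v o m ↑t) (udir o (xpath v o m ↑t)))
      rw [hxconst]; exact hstart
    · intro t j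
      show dist (cfg v (m+1) (xpath v o m ↑t) (udir o (xpath v o m ↑t)) (j+1))
        (cfg v (m+1) (xpath v o m ↑t) (udir o (xpath v o m ↑t)) j) = clen v j
      rw [hxconst]
      exact cfg_dist hv1o rfl j
  · -- nondegenerate stage
    obtain ⟨ℓ, hle, heq, hoc⟩ := support_exists hconv hcl ho (hbd m hm)
    have hcpos : 0 < clen v m := lt_of_le_of_ne dist_nonneg (Ne.symm hc)
    have hnorm : 0 < ‖v m - o‖ := norm_pos_iff.2 (sub_ne_zero.2 hvo)
    have hℓu0 : 0 < ℓ (udir o (v m)) := by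
      rw [udir, map_smul, map_sub, smul_eq_mul]
      have : 0 < ℓ (v m) - ℓ o := by linarith
      positivity
    have hwA : ℓ (v (m+1) - v m) = 0 := by rw [map_sub, heq]; ring
    have hBpos : 0 < ℓ (clen v m • udir o (v m)) := by
      rw [map_smul, smul_eq_mul]; positivity
    have hwne : ∀ t : ℝ, 0 ≤ t → t ≤ 1 → wvec v o m t ≠ 0 := by
      intro t ht0 ht1 h0
      have h1 := congrArg ℓ h0
      rw [wvec, map_add, map_smul, map_smul, map_zero, hwA, smul_eq_mul, smul_eq_mul,
        mul_zero, zero_add] at h1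
      rcases mul_eq_zero.1 h1 with h2 | h2
      · rw [h2] at h0
        rw [wvec] at h0
        simp only [sub_zero, one_smul, zero_smul, add_zero] at h0
        have : clen v m = 0 := by rw [clen, dist_eq_norm, h0, norm_zero]
        exact hc this
      · exact (ne_of_gt hBpos) h2
    have hwlin : ∀ t : ℝ, ℓ (wvec v o m t) = t * ℓ (clen v m • udir o (v m)) := by
      intro t
      rw [wvec, map_add, map_smul, map_smul, hwA, smul_eq_mul, smul_eq_mul, mul_zero, zero_add]
    have hxgt : ∀ t : ℝ, 0 < t → t ≤ 1 → ℓ (v m) < ℓ (xpath v o m t) := by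
      intro t ht0 ht1
      have hwn : 0 < ‖wvec v o m t‖ := norm_pos_iff.2 (hwne t (le_of_lt ht0) ht1)
      rw [xpath, map_add, map_smul, smul_eq_mul, hwlin]
      have : 0 < clen v m / ‖wvec v o m t‖ * (t * ℓ (clen v m • udir o (v m))) := by
        positivity
      linarith
    have hxne_o : ∀ t : unitInterval, xpath v o m ↑t ≠ o := by
      intro t
      rcases eq_or_lt_of_le t.2.1 with h0 | h0
      · rw [show (↑t : ℝ) = 0 from h0.symm, xpath_zero]; exact hv1o
      · intro h
        have := hxgt ↑t h0 t.2.2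
        rw [h] at this
        linarith
    have hxd : ∀ t : unitInterval, dist (xpath v o m ↑t) (v m) = clen v m := by
      intro t
      exact xpath_dist (Or.inl (hwne ↑t t.2.1 t.2.2))
    -- continuity
    have hwcont : Continuous fun t : unitInterval => wvec v o m ↑t := by
      unfold wvec
      fun_prop
    have hwnorm : ∀ t : unitInterval, ‖wvec v o m ↑t‖ ≠ 0 := by
      intro t
      exact norm_ne_zero_iff.2 (hwne ↑t t.2.1 t.2.2)
    have hxcont : Continuous fun t : unitInterval => xpath v o m ↑t := by
      unfold xpath
      exact continuous_const.add
        (((continuous_const.div hwcont.norm hwnorm)).smul hwcont)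
    have hucont : Continuous fun t : unitInterval => udir o (xpath v o m ↑t) := by
      unfold udir
      exact (((hxcont.sub continuous_const).norm.inv₀
        (fun t => norm_ne_zero_iff.2 (sub_ne_zero.2 (hxne_o t)))).smul
        (hxcont.sub continuous_const))
    refine ⟨⟨⟨fun t => cfg v (m+1) (xpath v o m ↑t) (udir o (xpath v o m ↑t)), ?_⟩, ?_, ?_⟩,
      ?_, ?_⟩
    · apply continuous_pi
      intro j
      by_cases hj : j < m + 1
      · have : (fun t : unitInterval =>
            cfg v (m+1) (xpath v o m ↑t) (udir o (xpath v o m ↑t)) j) = fun _ => v j := by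
          funext t; show (if j < m+1 then _ else _) = _; rw [if_pos hj]
        rw [this]; exact continuous_const
      · have : (fun t : unitInterval =>
            cfg v (m+1) (xpath v o m ↑t) (udir o (xpath v o m ↑t)) j)
            = fun t : unitInterval =>
              xpath v o m ↑t + (csum v j - csum v (m+1)) • udir o (xpath v o m ↑t) := by
          funext t; show (if j < m+1 then _ else _) = _; rw [if_neg hj]
        rw [this]
        exact hxcont.add (show Continuous fun t : unitInterval =>
            (csum v j - csum v (m+1)) • udir o (xpath v o m ↑t) from by fun_prop)
    · show cfg v (m+1) (xpath v o m ((0 : unitInterval) : ℝ)) _ = _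
      rw [Set.Icc.coe_zero, xpath_zero]
    · show cfg v (m+1) (xpath v o m ((1 : unitInterval) : ℝ)) _ = _
      rw [Set.Icc.coe_one, xpath_one hvo]
      exact cfg_trans m hvo
    · intro t
      show IsSimpleOpenChain n (cfg v (m+1) (xpath v o m ↑t) (udir o (xpath v o m ↑t)))
      rcases eq_or_lt_of_le t.2.1 with h0 | h0
      · rw [show (↑t : ℝ) = 0 from h0.symm, xpath_zero]; exact hstart
      · exact stage_simple hconv hcl ho hs hbd hm ℓ hle hoc (hxgt ↑t h0 t.2.2)
    · intro t j
      show dist (cfg v (m+1) (xpath v o m ↑t) (udir o (xpath v o m ↑t)) (j+1))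
        (cfg v (m+1) (xpath v o m ↑t) (udir o (xpath v o m ↑t)) j) = clen v j
      exact cfg_dist (hxne_o t) (hxd t) j

private lemma chain_congr {n : ℕ} {f g : ℕ → E3} (h : ∀ j < n, f j = g j)
    (hf : IsSimpleOpenChain n f) : IsSimpleOpenChain n g := by
  constructor
  · intro i j hi hj hij
    rw [← h i (by omega), ← h (i+1) (by omega), ← h j (by omega), ← h (j+1) (by omega)]
    exact hf.1 i j hi hj hij
  · intro i hi
    rw [← h i (by omega), ← h (i+1) (by omega), ← h (i+2) (by omega)]
    exact hf.2 i hi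

private lemma top_cfg {n : ℕ} (v : ℕ → E3) (o : E3) (hn : 1 ≤ n) :
    ∀ j < n, v j = cfg v (n-1) (v (n-1)) (udir o (v (n-1))) j := by
  intro j hj
  show v j = if j < n-1 then v j else _
  by_cases h : j < n-1
  · rw [if_pos h]
  · rw [if_neg h]
    have hj1 : j = n-1 := by omega
    subst hj1
    simp

private lemma simpleC {P : Set E3} (hconv : Convex ℝ P) (hcl : IsClosed P)
    {o : E3} (ho : o ∈ interior P)
    {n : ℕ} {v : ℕ → E3} (hs : IsSimpleOpenChain n v)
    (hbd : ∀ i : ℕ, i + 1 < n → segment ℝ (v i) (v (i+1)) ⊆ frontier P) :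
    ∀ d m : ℕ, m + 1 + d = n → IsSimpleOpenChain n (cfg v m (v m) (udir o (v m))) := by
  intro d
  induction d with
  | zero =>
    intro m hm
    have hmn : m = n - 1 := by omega
    subst hmn
    exact chain_congr (top_cfg v o (by omega)) hs
  | succ d ih =>
    intro m hm
    have hstart := ih (m+1) (by omega)
    obtain ⟨g, hg1, hg2⟩ := stage_path hconv hcl ho hs hbd (by omega) hstart
    have h1 := hg1 1
    rwa [g.target] at h1

private lemma full_path {P : Set E3} (hconv : Convex ℝ P) (hcl : IsClosed P)
    {o : E3} (ho : o ∈ interior P)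
    {n : ℕ} {v : ℕ → E3} (hs : IsSimpleOpenChain n v)
    (hbd : ∀ i : ℕ, i + 1 < n → segment ℝ (v i) (v (i+1)) ⊆ frontier P) :
    ∀ m : ℕ, m + 1 ≤ n →
      ∃ g : Path (cfg v m (v m) (udir o (v m))) (cfg v 0 (v 0) (udir o (v 0))),
        (∀ t : unitInterval, IsSimpleOpenChain n (g t)) ∧
        (∀ t : unitInterval, ∀ j : ℕ, j + 1 < n → dist (g t (j+1)) (g t j) = clen v j) := by
  intro m
  induction m with
  | zero =>
    intro h
    refine ⟨Path.refl _, ?_, ?_⟩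
    · intro t
      rw [Path.refl_apply]
      exact simpleC hconv hcl ho hs hbd (n-1) 0 (by omega)
    · intro t j hj
      have hfr : v 0 ∈ frontier P := hbd 0 (by omega) (left_mem_segment ℝ _ _)
      have h2 := cfg0_dist (o := o) (frontier_ne_o hcl ho hfr) j
      rw [Path.refl_apply]
      exact h2
  | succ m ih =>
    intro h
    have hm : m + 1 < n := by omega
    have hstart := simpleC hconv hcl ho hs hbd (n - (m+2)) (m+1) (by omega)
    obtain ⟨g1, hg11, hg12⟩ := stage_path hconv hcl ho hs hbd hm hstart
    obtain ⟨g2, hg21, hg22⟩ := ih (by omega)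
    refine ⟨g1.trans g2, ?_, ?_⟩
    · intro t
      rw [Path.trans_apply]
      split_ifs
      · exact hg11 _
      · exact hg21 _
    · intro t j hj
      rw [Path.trans_apply]
      split_ifs
      · exact hg12 _ _
      · exact hg22 _ _ hj


/-- Every simple open polygonal chain all of whose edges lie in
the boundary of a convex polytope (the convex hull of a finite set with nonempty
interior) can be straightened. -/
theorem straighten_of_chain_on_polytope (S : Set E3) (hfin : S.Finite)
    (hint : (interior (convexHull ℝ S)).Nonempty)
    (n : ℕ) (v : ℕ → E3)
    (hsimple : IsSimpleOpenChain n v)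
    (hbd : ∀ i : ℕ, i + 1 < n →
      segment ℝ (v i) (v (i+1)) ⊆ frontier (convexHull ℝ S)) :
    CanStraighten n v := by
  by_cases hn : n = 0
  · subst hn
    refine ⟨fun _ => v, ⟨?_, ?_, ?_, ?_⟩, ?_⟩
    · intro i _; exact continuousOn_const
    · intro i _; rfl
    · intro t _ i _; rfl
    · intro t _; exact hsimple
    · have h : {i : ℕ | i < 0} = (∅ : Set ℕ) := by simp
      rw [h, Set.image_empty]
      exact collinear_empty ℝ E3
  · have hn1 : 1 ≤ n := by omega
    have hconv : Convex ℝ (convexHull ℝ S) := convex_convexHull ℝ S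
    have hcl : IsClosed (convexHull ℝ S) := hfin.isClosed_convexHull ℝ
    obtain ⟨o, ho⟩ := hint
    obtain ⟨g, hg1, hg2⟩ := full_path hconv hcl ho hsimple hbd (n-1) (by omega)
    refine ⟨fun t j => g.extend t j, ⟨?_, ?_, ?_, ?_⟩, ?_⟩
    · intro i _
      exact ((continuous_apply i).comp g.continuous_extend).continuousOn
    · intro i hi
      show g.extend 0 i = v i
      rw [Path.extend_zero]
      exact (top_cfg v o hn1 i hi).symm
    · intro t ht i hi
      show dist (g.extend t (i+1)) (g.extend t i) = dist (v (i+1)) (v i)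
      rw [Path.extend_apply g ht]
      exact hg2 ⟨t, ht⟩ i hi
    · intro t ht
      show IsSimpleOpenChain n (fun j => g.extend t j)
      rw [Path.extend_apply g ht]
      exact hg1 _
    · show Collinear ℝ ((fun j => g.extend 1 j) '' {i | i < n})
      rw [Path.extend_one]
      rw [collinear_iff_exists_forall_eq_smul_vadd]
      refine ⟨v 0, udir o (v 0), ?_⟩
      rintro p ⟨j, hj, rfl⟩
      refine ⟨csum v j, ?_⟩
      show (if j < 0 then v j else v 0 + (csum v j - csum v 0) • udir o (v 0)) = _
      rw [if_neg (by omega), csum_zero, sub_zero, vadd_eq_add, add_comm]
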